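/- Let G_1,…,G_n be connected graphs with λ_1,…,λ_n vertices respectively, let H be any connected graph with vertex set {v_1,…,v_n}, and let G be the graph obtained by joining each vertex v_i of H by an edge to an arbitrarily chosen vertex u_i of G_i. If G has a connected partition of type μ, then the complete sun graph S̄(n; λ_1,…,λ_n) also has a connected partition of type μ. -/

import Mathlib

noncomputable section

open SimpleGraph

/-- The chromatic symmetric function of a finite simple graph, as a formal power
series in countably many commuting variables `x_0, x_1, x_2, …`: the coefficient of the
monomial `∏ i, x_i ^ d i` is the number of proper colourings `κ : V → ℕ` in which colour `i`
is used exactly `d i` times. -/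
def csf {V : Type} [Fintype V] (G : SimpleGraph V) : MvPowerSeries ℕ ℚ :=
  fun d => (Nat.card {κ : V → ℕ //
      (∀ u v : V, G.Adj u v → κ u ≠ κ v) ∧
      ∀ i : ℕ, Nat.card {v : V // κ v = i} = d i} : ℚ)

/-- The elementary symmetric function `e_k` as a formal power series. -/
def esym (k : ℕ) : MvPowerSeries ℕ ℚ :=
  fun d => if (∀ i ∈ d.support, d i = 1) ∧ (d.sum fun _ v => v) = k then 1 else 0

/-- `e_λ` for a partition `λ` given as a multiset of parts. -/
def esymM (μ : Multiset ℕ) : MvPowerSeries ℕ ℚ :=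
  (μ.map esym).prod

/-- A symmetric function is `e`-positive if it is a finite nonnegative linear combination
of the elementary symmetric functions `e_λ`, `λ` a partition (all parts positive). -/
def EPositive (f : MvPowerSeries ℕ ℚ) : Prop :=
  ∃ c : Multiset ℕ →₀ ℚ, (∀ μ, 0 ≤ c μ) ∧ (∀ μ ∈ c.support, 0 ∉ μ) ∧
    f = c.sum fun μ a => a • esymM μ

/-- The path `P_k` on `k` vertices. -/
def pathG (k : ℕ) : SimpleGraph (Fin k) :=
  SimpleGraph.fromRel (fun i j => (j : ℕ) = (i : ℕ) + 1)

/-- The cycle `C_m` on `m` vertices (for `m = 2` this is a single edge, i.e. `P_2`). -/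
def cycleG (m : ℕ) : SimpleGraph (Fin m) :=
  SimpleGraph.fromRel (fun i j => (j : ℕ) = ((i : ℕ) + 1) % m)

/-- Auxiliary relation for sun graphs: body relation on `Fin n`, plus rays
`P_{lam i}` attached at vertex `i`, the leaf `⟨i,0⟩` of ray `i` being joined to `i`. -/
def sunRel (n : ℕ) (lam : Fin n → ℕ) (body : Fin n → Fin n → Prop) :
    (Fin n ⊕ ((i : Fin n) × Fin (lam i))) → (Fin n ⊕ ((i : Fin n) × Fin (lam i))) → Prop
  | Sum.inl i, Sum.inl i' => body i i'
  | Sum.inl i, Sum.inr p => p.1 = i ∧ (p.2 : ℕ) = 0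
  | Sum.inr p, Sum.inr q => p.1 = q.1 ∧ (q.2 : ℕ) = (p.2 : ℕ) + 1
  | _, _ => False

/-- The sun graph `S(n; λ_1, …, λ_n)`: a cycle `C_n` with a path `P_{λ_i}` (a *ray*)
joined by an edge to the `i`-th cycle vertex, for each `i`. -/
def sunGraph (n : ℕ) (lam : Fin n → ℕ) :
    SimpleGraph (Fin n ⊕ ((i : Fin n) × Fin (lam i))) :=
  SimpleGraph.fromRel (sunRel n lam (fun i i' => (i' : ℕ) = ((i : ℕ) + 1) % n))

/-- The complete sun graph `S̄(n; λ_1, …, λ_n)`: as `sunGraph`, but with complete body `K_n`. -/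
def completeSunGraph (n : ℕ) (lam : Fin n → ℕ) :
    SimpleGraph (Fin n ⊕ ((i : Fin n) × Fin (lam i))) :=
  SimpleGraph.fromRel (sunRel n lam (fun i i' => i ≠ i'))

/-- The spider `S(μ_1, …, μ_d)`: `d` paths (legs) `P_{μ_i}`, each joined at a leaf to a
common centre vertex. -/
def spiderGraph (d : ℕ) (mu : Fin d → ℕ) :
    SimpleGraph (Unit ⊕ ((i : Fin d) × Fin (mu i))) :=
  SimpleGraph.fromRel (fun a b => match a, b with
    | Sum.inl _, Sum.inr p => (p.2 : ℕ) = 0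
    | Sum.inr p, Sum.inr q => p.1 = q.1 ∧ (q.2 : ℕ) = (p.2 : ℕ) + 1
    | _, _ => False)

/-- The graph obtained from a body graph `H` on `Fin n` by joining each body vertex `i`
by an edge to a chosen vertex `u i` of a graph `Gs i`. -/
def attachGraph {n : ℕ} {Vs : Fin n → Type} (H : SimpleGraph (Fin n))
    (Gs : ∀ i, SimpleGraph (Vs i)) (u : ∀ i, Vs i) :
    SimpleGraph (Fin n ⊕ ((i : Fin n) × Vs i)) :=
  SimpleGraph.fromRel (fun a b => match a, b with
    | Sum.inl i, Sum.inl i' => H.Adj i i'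
    | Sum.inl i, Sum.inr p => p.1 = i ∧ p.2 = u p.1
    | Sum.inr p, Sum.inr q => ∃ h : p.1 = q.1, (Gs q.1).Adj (h ▸ p.2) q.2
    | _, _ => False)

/-- `G` has a connected partition of type `μ`: a partition of the vertex set all of whose
blocks induce connected subgraphs, the multiset of block sizes being `μ`. -/
def HasConnectedPartition {V : Type} [Fintype V] [DecidableEq V]
    (G : SimpleGraph V) (μ : Multiset ℕ) : Prop :=
  ∃ P : Finpartition (Finset.univ : Finset V),
    (∀ p ∈ P.parts, (G.induce (↑p : Set V)).Connected) ∧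
      P.parts.val.map Finset.card = μ

/-- `G` has a perfect matching: a partition of `V(G)` into pairs of adjacent vertices. -/
def HasPerfectMatching {V : Type} (G : SimpleGraph V) : Prop :=
  ∃ M : G.Subgraph, M.IsPerfectMatching

/-- `G` has an almost perfect matching: a partition of `V(G)` into pairs of adjacent
vertices together with one singleton. -/
def HasAlmostPerfectMatching {V : Type} (G : SimpleGraph V) : Prop :=
  ∃ M : G.Subgraph, M.IsMatching ∧ ∃ v : V, M.verts = {v}ᶜ

/-- The tadpole graph `T_{m,l}`: the cycle `C_m` (vertices `0, …, m-1`, consecutive edges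
plus the chord `{0, m-1}`) with a path on `l` further vertices attached by an edge at
vertex `m-1`.  For `l = 0` this is just `C_m`. -/
def tadpole (m l : ℕ) : SimpleGraph (Fin (m + l)) :=
  SimpleGraph.fromRel (fun i j =>
    (j : ℕ) = (i : ℕ) + 1 ∨ ((i : ℕ) = 0 ∧ (j : ℕ) = m - 1))

/-- Dumbbell with path-parameter `t = l + 1 ≥ 0`: vertices `0, …, m-1` form the cycle `C_m`
(consecutive edges plus chord `{0, m-1}`), vertices `m+t-1, …, m+n+t-2` form the cycle `C_n`
(consecutive edges plus chord `{m+t-1, m+n+t-2}`), and the vertices in between form the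
connecting path; for `t = 0` (i.e. `l = -1`) the two cycles share the vertex `m-1`. -/
def dumbbellAux (m n t : ℕ) : SimpleGraph (Fin (m + n + t - 1)) :=
  SimpleGraph.fromRel (fun i j =>
    (j : ℕ) = (i : ℕ) + 1
      ∨ ((i : ℕ) = 0 ∧ (j : ℕ) = m - 1)
      ∨ ((i : ℕ) = m + t - 1 ∧ (j : ℕ) = m + n + t - 2))

/-- The dumbbell graph `D(m, l, n)` for `l ≥ -1`: cycles `C_m` and `C_n` joined by a path
on `l` vertices (for `l = 1` a single joining vertex, for `l = 0` a joining edge, and for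
`l = -1` the two cycles share a vertex). -/
def dumbbell (m n : ℕ) (l : ℤ) : SimpleGraph (Fin (m + n + (l + 1).toNat - 1)) :=
  dumbbellAux m n (l + 1).toNat

end

lemma exists_part_equiv {α β : Type} [Fintype α] [DecidableEq α] [Fintype β] [DecidableEq β]
    {m : ℕ} (hm : Fintype.card α = m) (part : α → β) (u0 : α) :
    ∃ e : α ≃ Fin m,
      (∀ h0 : 0 < m, part (e.symm ⟨0, h0⟩) = part u0) ∧
      (∀ a b c : Fin m, a ≤ b → b ≤ c → part (e.symm a) = part (e.symm c) →
        part (e.symm b) = part (e.symm a)) := by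
  classical
  rcases Nat.eq_zero_or_pos m with rfl | hm0
  · exact ⟨(Fintype.equivFin α).trans (finCongr hm), fun h0 => absurd h0 (by omega),
      fun a => absurd a.2 (by omega)⟩
  let eβ := Fintype.equivFin β
  let eα : α ≃ Fin m := (Fintype.equivFin α).trans (finCongr hm)
  let rank : α → ℕ := fun x => if part x = part u0 then 0 else eβ (part x) + 1
  have hrank_congr : ∀ x y : α, part x = part y → rank x = rank y := by
    intro x y hxy
    simp only [rank, hxy]
  have hrank_part : ∀ x y : α, rank x = rank y → part x = part y := by
    intro x y hxy
    by_cases hx : part x = part u0 <;> by_cases hy : part y = part u0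
    · exact hx.trans hy.symm
    · simp only [rank, if_pos hx, if_neg hy] at hxy; omega
    · simp only [rank, if_neg hx, if_pos hy] at hxy; omega
    · simp only [rank, if_neg hx, if_neg hy] at hxy
      exact eβ.injective (Fin.ext (by omega))
  have hrank_zero : ∀ x : α, rank x = 0 → part x = part u0 := by
    intro x hx
    by_cases h : part x = part u0
    · exact h
    · simp only [rank, if_neg h] at hx; omega
  have hranku0 : rank u0 = 0 := by simp [rank]
  let key : α → ℕ := fun x => (eα x : ℕ) + rank x * m
  have hkey_inj : Function.Injective key := by
    intro x y hxy
    have h1 : (eα x : ℕ) = (eα y : ℕ) := by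
      have := congrArg (· % m) hxy
      simpa [key, Nat.add_mul_mod_self_right, Nat.mod_eq_of_lt (eα x).2,
        Nat.mod_eq_of_lt (eα y).2] using this
    exact eα.injective (Fin.ext h1)
  have hrank_mono : ∀ x y : α, key x ≤ key y → rank x ≤ rank y := by
    intro x y hxy
    by_contra hc
    push_neg at hc
    have h1 : rank y * m + m ≤ rank x * m := by
      rw [← Nat.succ_mul]; exact Nat.mul_le_mul_right m hc
    have h2 : key y < rank y * m + m := by
      have := (eα y).2
      simp only [key]
      omega
    have h3 : rank x * m ≤ key x := Nat.le_add_left _ _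
    omega
  letI : LinearOrder α := LinearOrder.lift' key hkey_inj
  have hle : ∀ x y : α, x ≤ y ↔ key x ≤ key y := fun _ _ => Iff.rfl
  let e : Fin m ≃o α := monoEquivOfFin α hm
  have hmono : ∀ a b : Fin m, a ≤ b → key (e a) ≤ key (e b) := by
    intro a b hab
    exact (hle _ _).mp (e.monotone hab)
  refine ⟨e.toEquiv.symm, ?_, ?_⟩
  · intro h0
    have h1 : key (e ⟨0, h0⟩) ≤ key (e (e.symm u0)) := hmono _ _ (by simp [Fin.le_def])
    rw [OrderIso.apply_symm_apply] at h1
    have h2 : rank (e ⟨0, h0⟩) ≤ rank u0 := hrank_mono _ _ h1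
    rw [hranku0] at h2
    simpa using hrank_zero _ (Nat.le_zero.mp h2)
  · intro a b c hab hbc hac
    simp only [Equiv.symm_symm] at hac ⊢
    have h1 : rank (e.toEquiv a) ≤ rank (e.toEquiv b) := hrank_mono _ _ (hmono _ _ hab)
    have h2 : rank (e.toEquiv b) ≤ rank (e.toEquiv c) := hrank_mono _ _ (hmono _ _ hbc)
    have h3 : rank (e.toEquiv a) = rank (e.toEquiv c) := hrank_congr _ _ hac
    exact hrank_part _ _ (by omega)

lemma attach_exit {n : ℕ} {Vs : Fin n → Type}
    (H : SimpleGraph (Fin n)) (Gs : ∀ i, SimpleGraph (Vs i)) (u : ∀ i, Vs i)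
    (p : Set (Fin n ⊕ (i : Fin n) × Vs i)) {i : Fin n}
    {a y : ↥p} (w : ((attachGraph H Gs u).induce p).Walk a y)
    (ha : ∃ z : Vs i, a.1 = Sum.inr ⟨i, z⟩)
    (hy : ∀ z : Vs i, y.1 ≠ Sum.inr ⟨i, z⟩) :
    Sum.inl i ∈ p ∧ Sum.inr ⟨i, u i⟩ ∈ p := by
  induction w with
  | nil =>
    obtain ⟨z, hz⟩ := ha
    exact absurd hz (hy z)
  | @cons a b y h w ih =>
    by_cases hb : ∃ z : Vs i, b.1 = Sum.inr ⟨i, z⟩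
    · exact ih hb hy
    · obtain ⟨z, hz⟩ := ha
      have hadj : (attachGraph H Gs u).Adj a.1 b.1 := h
      rw [attachGraph, SimpleGraph.fromRel_adj] at hadj
      obtain ⟨hne, hrel⟩ := hadj
      obtain ⟨bv, hbmem⟩ := b
      rw [hz] at hrel
      rcases bv with j | ⟨j, x⟩
      · rcases hrel with h1 | h2
        · exact h1.elim
        · obtain ⟨h21, h22⟩ := h2
          have h21' : i = j := h21
          have h22' : z = u i := h22
          subst h21'
          refine ⟨hbmem, ?_⟩
          have := a.2
          rw [hz, h22'] at this
          exact this
      · exfalso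
        rcases hrel with h1 | h2
        · obtain ⟨h11, -⟩ := h1
          have h11' : i = j := h11
          subst h11'
          exact hb ⟨x, rfl⟩
        · obtain ⟨h11, -⟩ := h2
          have h11' : j = i := h11
          subst h11'
          exact hb ⟨x, rfl⟩

lemma sun_descend {n : ℕ} {lam : Fin n → ℕ} (S : Set (Fin n ⊕ (i : Fin n) × Fin (lam i)))
    (i : Fin n) :
    ∀ (k : ℕ) (c d : Fin (lam i)), (c : ℕ) = d + k →
    (∀ b : Fin (lam i), d ≤ b → b ≤ c → Sum.inr ⟨i, b⟩ ∈ S) →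
    ∀ (hc : Sum.inr ⟨i, c⟩ ∈ S) (hd : Sum.inr ⟨i, d⟩ ∈ S),
    ((completeSunGraph n lam).induce S).Reachable ⟨Sum.inr ⟨i, c⟩, hc⟩ ⟨Sum.inr ⟨i, d⟩, hd⟩ := by
  intro k
  induction k with
  | zero =>
    intro c d hcd _ hc hd
    have : c = d := Fin.ext (by omega)
    subst this
    rfl
  | succ k ih =>
    intro c d hcd hall hc hd
    have hlt : (d : ℕ) + k < lam i := by have := c.2; omega
    set c' : Fin (lam i) := ⟨(d : ℕ) + k, hlt⟩ with hc'
    have h4 : (c' : ℕ) = (d : ℕ) + k := rfl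
    have hmemc' : Sum.inr ⟨i, c'⟩ ∈ S :=
      hall c' (by rw [Fin.le_def]; omega) (by rw [Fin.le_def]; omega)
    have hadj : ((completeSunGraph n lam).induce S).Adj ⟨Sum.inr ⟨i, c⟩, hc⟩ ⟨Sum.inr ⟨i, c'⟩, hmemc'⟩ := by
      show (completeSunGraph n lam).Adj (Sum.inr ⟨i, c⟩) (Sum.inr ⟨i, c'⟩)
      rw [completeSunGraph, SimpleGraph.fromRel_adj]
      constructor
      · intro hcon
        have h3 : (c : ℕ) = (c' : ℕ) := by
          obtain ⟨-, h2⟩ := Sigma.mk.inj_iff.mp (Sum.inr.inj hcon)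
          rw [eq_of_heq h2]
        omega
      · exact Or.inr (show (⟨i, c'⟩ : (j : Fin n) × Fin (lam j)).1 = (⟨i, c⟩ : (j : Fin n) × Fin (lam j)).1 ∧ (c : ℕ) = (c' : ℕ) + 1 from ⟨rfl, by omega⟩)
    refine hadj.reachable.trans (ih c' d (by omega) ?_ hmemc' hd)
    intro b hdb hbc'
    exact hall b hdb (le_trans hbc' (by rw [Fin.le_def]; omega))

/-- If `G` is obtained by joining each vertex `v_i` of an arbitrary connected
graph `H` on vertex set `{v_1, …, v_n}` by an edge to a chosen vertex `u_i` of a connected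
graph `G_i` on `λ_i` vertices, and `G` has a connected partition of type `μ`, then so does
the complete sun `S̄(n; λ_1, …, λ_n)`. -/

theorem completeSun_connectedPartition_of_attach (n : ℕ) (hn : 3 ≤ n)
    (lam : Fin n → ℕ) (hpos : ∀ i, 0 < lam i)
    (H : SimpleGraph (Fin n)) (hH : H.Connected)
    (Vs : Fin n → Type) [∀ i, Fintype (Vs i)] [∀ i, DecidableEq (Vs i)]
    (Gs : ∀ i, SimpleGraph (Vs i)) (hconn : ∀ i, (Gs i).Connected)
    (hcard : ∀ i, Fintype.card (Vs i) = lam i)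
    (u : ∀ i, Vs i) (μ : Multiset ℕ)
    (h : HasConnectedPartition (attachGraph H Gs u) μ) :
    HasConnectedPartition (completeSunGraph n lam) μ := by
  classical
  obtain ⟨P, hPconn, hPtype⟩ := h
  choose φ hφ0 hφsand using fun i : Fin n =>
    exists_part_equiv (hcard i) (fun x : Vs i => P.part (Sum.inr ⟨i, x⟩)) (u i)
  set Φ : (Fin n ⊕ (i : Fin n) × Vs i) ≃ (Fin n ⊕ (i : Fin n) × Fin (lam i)) :=
    Equiv.sumCongr (Equiv.refl _) (Equiv.sigmaCongrRight φ) with hΦ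
  have hΦl : ∀ j, Φ (Sum.inl j) = Sum.inl j := fun j => rfl
  have hΦsl : ∀ j, Φ.symm (Sum.inl j) = Sum.inl j := fun j => rfl
  have hΦsr : ∀ (i : Fin n) (c : Fin (lam i)),
      Φ.symm (Sum.inr ⟨i, c⟩) = Sum.inr ⟨i, (φ i).symm c⟩ := fun i c => rfl
  refine ⟨⟨P.parts.map ⟨fun t => t.map Φ.toEmbedding,
      fun t1 t2 h12 => Finset.map_injective _ h12⟩, ?_, ?_, ?_⟩, ?_, ?_⟩
  · rw [Finset.supIndep_iff_pairwiseDisjoint]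
    intro t1 h1 t2 h2 hne
    rw [Finset.mem_coe, Finset.mem_map] at h1 h2
    obtain ⟨s1, hs1, rfl⟩ := h1
    obtain ⟨s2, hs2, rfl⟩ := h2
    have hne' : s1 ≠ s2 := fun hcon => hne (by rw [hcon])
    have := P.disjoint (Finset.mem_coe.mpr hs1) (Finset.mem_coe.mpr hs2) hne'
    simp only [Function.onFun, id, Function.Embedding.coeFn_mk] at this ⊢
    show Disjoint (s1.map Φ.toEmbedding) (s2.map Φ.toEmbedding)
    rwa [Finset.disjoint_map]
  · refine Finset.ext fun w => ⟨fun _ => Finset.mem_univ _, fun _ => ?_⟩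
    rw [Finset.mem_sup]
    obtain ⟨t, ht, hmem⟩ := P.exists_mem (Finset.mem_univ (Φ.symm w))
    exact ⟨t.map Φ.toEmbedding, Finset.mem_map_of_mem _ ht, Finset.mem_map_equiv.mpr hmem⟩
  · intro hbot
    simp only [Finset.mem_map, Function.Embedding.coeFn_mk] at hbot
    obtain ⟨t, ht, hteq⟩ := hbot
    apply P.bot_notMem
    have : t = ⊥ := by
      change t.map Φ.toEmbedding = ∅ at hteq
      rw [Finset.bot_eq_empty]
      rwa [Finset.map_eq_empty] at hteq
    rwa [this] at ht
  · intro q hq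
    simp only [Finset.mem_map, Function.Embedding.coeFn_mk] at hq
    obtain ⟨p, hp, rfl⟩ := hq
    set S : Set (Fin n ⊕ (i : Fin n) × Fin (lam i)) :=
      (↑(p.map Φ.toEmbedding) : Set (Fin n ⊕ (i : Fin n) × Fin (lam i))) with hS
    have hpc := hPconn p hp
    have hmemq : ∀ w, w ∈ S ↔ Φ.symm w ∈ p := by
      intro w
      rw [hS, Finset.mem_coe, Finset.mem_map_equiv]
    have hexit : ∀ (i : Fin n) (x : Vs i), Sum.inr ⟨i, x⟩ ∈ p → ∀ y ∈ p,
        (∀ z : Vs i, y ≠ Sum.inr ⟨i, z⟩) → Sum.inl i ∈ p ∧ Sum.inr ⟨i, u i⟩ ∈ p := by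
      intro i x hx y hy hyz
      obtain ⟨wlk⟩ := hpc.preconnected ⟨Sum.inr ⟨i, x⟩, hx⟩ ⟨y, hy⟩
      exact attach_exit H Gs u (↑p) wlk ⟨x, rfl⟩ hyz
    have hpartp : ∀ x ∈ p, P.part x = p := fun x hx => P.part_eq_of_mem hp hx
    have hppart : ∀ x, P.part x = p → x ∈ p := by
      intro x hx
      have := P.mem_part (Finset.mem_univ x)
      rwa [hx] at this
    have hreach_ll : ∀ (j j' : Fin n) (hj : Sum.inl j ∈ S)
        (hj' : Sum.inl j' ∈ S),
        ((completeSunGraph n lam).induce S).Reachable ⟨Sum.inl j, hj⟩ ⟨Sum.inl j', hj'⟩ := by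
      intro j j' hj hj'
      by_cases hjj : j = j'
      · subst hjj
        rfl
      · refine SimpleGraph.Adj.reachable ?_
        show (completeSunGraph n lam).Adj (Sum.inl j) (Sum.inl j')
        rw [completeSunGraph, SimpleGraph.fromRel_adj]
        exact ⟨fun hcon => hjj (Sum.inl.inj hcon), Or.inl hjj⟩
    by_cases hbody : ∃ j, Sum.inl j ∈ p
    · obtain ⟨i0, hi0⟩ := hbody
      have hbase : Sum.inl i0 ∈ S :=
        (hmemq _).mpr (by rw [hΦsl]; exact hi0)
      rw [SimpleGraph.connected_iff_exists_forall_reachable]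
      refine ⟨⟨Sum.inl i0, hbase⟩, ?_⟩
      rintro ⟨v, hv⟩
      match v, hv with
      | Sum.inl j, hv => exact hreach_ll i0 j hbase hv
      | Sum.inr ⟨i, c⟩, hv =>
        have hvc : Sum.inr ⟨i, (φ i).symm c⟩ ∈ p := by
          have := (hmemq _).mp hv
          rwa [hΦsr] at this
        obtain ⟨hinl, hui⟩ := hexit i ((φ i).symm c) hvc (Sum.inl i0) hi0
          (fun z hcon => by simp at hcon)
        have hpc' : P.part (Sum.inr ⟨i, (φ i).symm c⟩) = p := hpartp _ hvc
        have hpu : P.part (Sum.inr ⟨i, u i⟩) = p := hpartp _ hui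
        have h0mem : P.part (Sum.inr ⟨i, (φ i).symm ⟨0, hpos i⟩⟩) = p := by
          rw [hφ0 i (hpos i), hpu]
        have h00 : ((⟨0, hpos i⟩ : Fin (lam i)) : ℕ) = 0 := rfl
        have hall : ∀ b : Fin (lam i), (⟨0, hpos i⟩ : Fin (lam i)) ≤ b → b ≤ c →
            Sum.inr ⟨i, b⟩ ∈ S := by
          intro b h0b hbc
          rw [hmemq, hΦsr]
          apply hppart
          rw [hφsand i ⟨0, hpos i⟩ b c h0b hbc (by rw [h0mem, hpc']), h0mem]
        have h0set : Sum.inr ⟨i, (⟨0, hpos i⟩ : Fin (lam i))⟩ ∈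
            S :=
          hall ⟨0, hpos i⟩ le_rfl (by rw [Fin.le_def]; omega)
        have reach1 := sun_descend S i (c : ℕ) c ⟨0, hpos i⟩
          (by omega) hall hv h0set
        have hinlset : Sum.inl i ∈ S :=
          (hmemq _).mpr (by rw [hΦsl]; exact hinl)
        have hadj0 : ((completeSunGraph n lam).induce S).Adj
            ⟨Sum.inr ⟨i, (⟨0, hpos i⟩ : Fin (lam i))⟩, h0set⟩ ⟨Sum.inl i, hinlset⟩ := by
          show (completeSunGraph n lam).Adj _ _
          rw [completeSunGraph, SimpleGraph.fromRel_adj]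
          exact ⟨fun hcon => by simp at hcon, Or.inr ⟨rfl, rfl⟩⟩
        exact ((reach1.trans hadj0.reachable).trans (hreach_ll i i0 hinlset hbase)).symm
    · push_neg at hbody
      obtain ⟨x0, hx0⟩ := P.nonempty_of_mem_parts hp
      match x0, hx0 with
      | Sum.inl j, hx0 => exact absurd hx0 (hbody j)
      | Sum.inr ⟨i, z⟩, hx0 =>
      have hsub : ∀ y ∈ p, ∃ x : Vs i, y = Sum.inr ⟨i, x⟩ := by
        intro y hy
        by_contra hcon
        push_neg at hcon
        obtain ⟨hinl, -⟩ := hexit i z hx0 y hy hcon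
        exact hbody i hinl
      set T : Finset (Fin (lam i)) :=
        Finset.univ.filter (fun c => Sum.inr ⟨i, (φ i).symm c⟩ ∈ p) with hT
      have hTne : T.Nonempty := ⟨φ i z, by simp [hT, hx0]⟩
      have hc0T : T.min' hTne ∈ T := T.min'_mem hTne
      set c0 : Fin (lam i) := T.min' hTne with hc0
      have hc0mem : Sum.inr ⟨i, (φ i).symm c0⟩ ∈ p := by
        rw [hT] at hc0T
        simpa using hc0T
      have hbase : Sum.inr ⟨i, c0⟩ ∈ S :=
        (hmemq _).mpr (by rw [hΦsr]; exact hc0mem)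
      rw [SimpleGraph.connected_iff_exists_forall_reachable]
      refine ⟨⟨Sum.inr ⟨i, c0⟩, hbase⟩, ?_⟩
      rintro ⟨v, hv⟩
      match v, hv with
      | Sum.inl j, hv =>
        exfalso
        have := (hmemq _).mp hv
        rw [hΦsl] at this
        exact hbody j this
      | Sum.inr ⟨i', c⟩, hv =>
        have hvc : Sum.inr ⟨i', (φ i').symm c⟩ ∈ p := by
          have := (hmemq _).mp hv
          rwa [hΦsr] at this
        obtain ⟨x, hx⟩ := hsub _ hvc
        have hii : i' = i := congrArg Sigma.fst (Sum.inr.inj hx)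
        subst hii
        have hcT : c ∈ T := by
          rw [hT]
          simp only [Finset.mem_filter, Finset.mem_univ, true_and]
          exact hvc
        have hc0c : (c0 : ℕ) ≤ (c : ℕ) := T.min'_le c hcT
        have hpcc : P.part (Sum.inr ⟨i', (φ i').symm c⟩) = p := hpartp _ hvc
        have hpc0 : P.part (Sum.inr ⟨i', (φ i').symm c0⟩) = p := hpartp _ hc0mem
        have hall : ∀ b : Fin (lam i'), c0 ≤ b → b ≤ c →
            Sum.inr ⟨i', b⟩ ∈ S := by
          intro b h0b hbc
          rw [hmemq, hΦsr]
          apply hppart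
          rw [hφsand i' c0 b c h0b hbc (by rw [hpc0, hpcc]), hpc0]
        exact (sun_descend S i' ((c : ℕ) - (c0 : ℕ)) c c0
          (by omega) hall hv hbase).symm
  · simp only [Finset.map_val, Multiset.map_map, Function.comp,
      Function.Embedding.coeFn_mk, Finset.card_map]
    show Multiset.map (fun x => (x.map Φ.toEmbedding).card) P.parts.val = μ
    simpa using hPtype
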